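/- arXiv:2012.04004 — 2 statements merged into one kernel-verified Lean document; each statement's English description precedes it below -/
import Mathlib

section
/- Let A be a τ-algebra, let V be the variety generated by A, and let θ be a congruence of F_k^V such that F_k^V/θ belongs to the pseudovariety of finitely generated algebras generated by A. Then, identifying F_k^V with the k-ary term operations of A, there exist m ≥ 1 and tuples ā¹, …, ā^m ∈ A^k such that U_{ā¹} ∩ ⋯ ∩ U_{ā^m} ⊆ θ, where U_ā = {(f,g) : f, g k-ary term operations of A with f(ā) = g(ā)}. -/
/-! Universal-algebra preamble: functional signatures, algebras (with nonempty
carriers, as usual in universal algebra), terms, homomorphisms, congruences,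
quotients, free algebras, and the operators/uniformities of the paper.

Families indexed over the components of a clone are indexed by `k : ℕ`, where
index `k` stands for the component of arity `k + 1` (so all arities `≥ 1`). -/

/-- A functional signature: a type of function symbols together with arities. -/
structure Signature : Type 1 where
  F : Type
  arity : F → ℕ

/-- A τ-algebra: a nonempty carrier together with an interpretation of each symbol. -/
structure Alg (σ : Signature) : Type 1 where
  carrier : Type
  nonempty : Nonempty carrier
  op : ∀ f : σ.F, (Fin (σ.arity f) → carrier) → carrier

/-- Abstract τ-terms over the variables x_1, …, x_n. -/
inductive Trm (σ : Signature) (n : ℕ) : Type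
  | var : Fin n → Trm σ n
  | app : ∀ f : σ.F, (Fin (σ.arity f) → Trm σ n) → Trm σ n

variable {σ : Signature}

/-- Evaluation of a term in an algebra under a valuation of the variables. -/
def Trm.eval {n : ℕ} (A : Alg σ) (v : Fin n → A.carrier) : Trm σ n → A.carrier
  | .var i => v i
  | .app f ts => A.op f fun i => Trm.eval A v (ts i)

/-- The term operation `t^A` induced on `A` by the term `t`. -/
def termOp {n : ℕ} (A : Alg σ) (t : Trm σ n) : (Fin n → A.carrier) → A.carrier :=
  fun v => t.eval A v

/-- Homomorphisms of τ-algebras. -/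
def IsHom (A B : Alg σ) (h : A.carrier → B.carrier) : Prop :=
  ∀ (f : σ.F) (x : Fin (σ.arity f) → A.carrier), h (A.op f x) = B.op f fun i => h (x i)

/-- Isomorphism of τ-algebras. -/
def Isomorphic (A B : Alg σ) : Prop :=
  ∃ h : A.carrier → B.carrier, IsHom A B h ∧ Function.Bijective h

/-- Membership in the subuniverse generated by `S`. -/
inductive InClosure (A : Alg σ) (S : Set A.carrier) : A.carrier → Prop
  | base : ∀ a ∈ S, InClosure A S a
  | app : ∀ (f : σ.F) (x : Fin (σ.arity f) → A.carrier),
      (∀ i, InClosure A S (x i)) → InClosure A S (A.op f x)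

/-- An algebra is finitely generated if a finite subset generates it. -/
def FinGen (A : Alg σ) : Prop :=
  ∃ S : Set A.carrier, S.Finite ∧ ∀ a, InClosure A S a

/-- Product of a family of algebras. -/
def PiAlg {ι : Type} (A : ι → Alg σ) : Alg σ where
  carrier := ∀ i, (A i).carrier
  nonempty := ⟨fun i => Classical.choice (A i).nonempty⟩
  op f x := fun i => (A i).op f fun j => x j i

/-- A congruence: an equivalence relation compatible with all operations. -/
def IsCongruence (A : Alg σ) (r : A.carrier → A.carrier → Prop) : Prop :=
  Equivalence r ∧ ∀ (f : σ.F) (x y : Fin (σ.arity f) → A.carrier),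
    (∀ i, r (x i) (y i)) → r (A.op f x) (A.op f y)

/-- Bundled congruences on an algebra. -/
structure Cong (A : Alg σ) : Type where
  r : A.carrier → A.carrier → Prop
  iscon : IsCongruence A r

/-- The quotient algebra of `A` by (a relation which is intended to be) a congruence. -/
noncomputable def quotAlg (A : Alg σ) (r : A.carrier → A.carrier → Prop) : Alg σ where
  carrier := Quot r
  nonempty := ⟨Quot.mk r (Classical.choice A.nonempty)⟩
  op f x := Quot.mk r (A.op f fun i => (x i).out)

/-- The subalgebra of `A` on a nonempty subset closed under the operations. -/
def subAlg (A : Alg σ) (S : Set A.carrier) (hne : S.Nonempty)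
    (hcl : ∀ (f : σ.F) (x : Fin (σ.arity f) → A.carrier), (∀ i, x i ∈ S) → A.op f x ∈ S) :
    Alg σ where
  carrier := {a : A.carrier // a ∈ S}
  nonempty := ⟨⟨hne.choose, hne.choose_spec⟩⟩
  op f x := ⟨A.op f fun i => (x i).1, hcl f _ fun i => (x i).2⟩

/-- The subalgebra of `A` generated by a nonempty subset `S`. -/
def genSubAlg (A : Alg σ) (S : Set A.carrier) (hne : S.Nonempty) : Alg σ where
  carrier := {a : A.carrier // InClosure A S a}
  nonempty := ⟨⟨hne.choose, InClosure.base _ hne.choose_spec⟩⟩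
  op f x := ⟨A.op f fun i => (x i).1, InClosure.app f _ fun i => (x i).2⟩

/-- H: homomorphic images of members of `K`. -/
def Hcl (K : Set (Alg σ)) : Set (Alg σ) :=
  {B | ∃ A ∈ K, ∃ h : A.carrier → B.carrier, IsHom A B h ∧ Function.Surjective h}

/-- I: isomorphic copies of members of `K`. -/
def Icl (K : Set (Alg σ)) : Set (Alg σ) := {B | ∃ A ∈ K, Isomorphic A B}

/-- S: isomorphic copies of subalgebras (i.e. algebras embedding into members) of `K`. -/
def Scl (K : Set (Alg σ)) : Set (Alg σ) :=
  {B | ∃ A ∈ K, ∃ e : B.carrier → A.carrier, IsHom B A e ∧ Function.Injective e}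

/-- P_f: isomorphic copies of finite (nonempty) products of members of `K`. -/
def Pfcl (K : Set (Alg σ)) : Set (Alg σ) :=
  {B | ∃ (n : ℕ) (A : Fin (n + 1) → Alg σ), (∀ i, A i ∈ K) ∧ Isomorphic (PiAlg A) B}

/-- S_f: isomorphic copies of finitely generated subalgebras of members of `K`. -/
def Sf (K : Set (Alg σ)) : Set (Alg σ) :=
  {B | FinGen B ∧ ∃ A ∈ K, ∃ e : B.carrier → A.carrier, IsHom B A e ∧ Function.Injective e}

/-- S P_f: isomorphic copies of finitely generated subalgebras of finite products
of members of `K`. -/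
def SPf (K : Set (Alg σ)) : Set (Alg σ) :=
  {B | FinGen B ∧ ∃ (n : ℕ) (A : Fin (n + 1) → Alg σ), (∀ i, A i ∈ K) ∧
    ∃ e : B.carrier → (PiAlg A).carrier, IsHom B (PiAlg A) e ∧ Function.Injective e}

/-- A pseudovariety of finitely generated algebras: a class of finitely generated
algebras closed under homomorphic images and under isomorphic copies of finitely
generated subalgebras of finite products of its members. -/
def IsPseudovarietyFG (C : Set (Alg σ)) : Prop :=
  (∀ A ∈ C, FinGen A) ∧ Hcl C ⊆ C ∧ SPf C ⊆ C

/-- A pseudovariety of finite algebras: a class of finite algebras closed under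
finite products, subalgebras and homomorphic images. -/
def IsPseudovarietyFin (C : Set (Alg σ)) : Prop :=
  (∀ A ∈ C, Finite A.carrier) ∧ Hcl C ⊆ C ∧ Scl C ⊆ C ∧ Pfcl C ⊆ C

/-- A variety: a class closed under arbitrary products, subalgebras and
homomorphic images. -/
def IsVariety (V : Set (Alg σ)) : Prop :=
  (∀ (ι : Type) (A : ι → Alg σ), (∀ i, A i ∈ V) → PiAlg A ∈ V) ∧
  Scl V ⊆ V ∧ Hcl V ⊆ V

/-- The identities of the class `C`: `s` and `t` are identified iff they induce the
same operation on every member of `C`. -/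
def FreeCon (C : Set (Alg σ)) (n : ℕ) : Trm σ n → Trm σ n → Prop :=
  fun s t => ∀ A ∈ C, ∀ v : Fin n → A.carrier, s.eval A v = t.eval A v

/-- `freeAlg C k` is `F_{k+1}^C`, the free algebra for `C` on `k + 1` generators:
the term algebra on the variables `x_1, …, x_{k+1}` modulo the identities of `C`.
(The index `k` stands for arity `k + 1`, so all components have arity `≥ 1`.) -/
noncomputable def freeAlg (C : Set (Alg σ)) (k : ℕ) : Alg σ where
  carrier := Quot (FreeCon C (k + 1))
  nonempty := ⟨Quot.mk _ (Trm.var 0)⟩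
  op f x := Quot.mk _ (Trm.app f fun i => (x i).out)

/-- The finitely generated members of `V`. -/
def Vfg (V : Set (Alg σ)) : Set (Alg σ) := {A | A ∈ V ∧ FinGen A}

/-- `B^K`: the congruences of the free algebras whose quotient is isomorphic to a
member of `K`. -/
def BK (V K : Set (Alg σ)) (k : ℕ) : Set (Cong (freeAlg V k)) :=
  {θ | quotAlg (freeAlg V k) θ.r ∈ Icl K}

/-- `K^B`: isomorphic copies of the quotients of free algebras by congruences in `B`. -/
def KB (V : Set (Alg σ)) (B : ∀ k : ℕ, Set (Cong (freeAlg V k))) : Set (Alg σ) :=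
  Icl {A | ∃ (k : ℕ), ∃ θ ∈ B k, A = quotAlg (freeAlg V k) θ.r}

/-- `θ/t̄`: the inverse substitution of the congruence `θ` along the tuple `t̄`;
`s (θ/t̄) s'` iff `s(t₁,…,t_m) θ s'(t₁,…,t_m)`. -/
noncomputable def conSubstRel {V : Set (Alg σ)} {k : ℕ} (θ : Cong (freeAlg V k)) {m : ℕ}
    (t : Fin (m + 1) → (freeAlg V k).carrier) :
    (freeAlg V m).carrier → (freeAlg V m).carrier → Prop :=
  fun s s' => θ.r (Trm.eval (freeAlg V k) t s.out) (Trm.eval (freeAlg V k) t s'.out)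

/-- A family of congruences is closed under inverse substitution. -/
def InvSubstClosed (V : Set (Alg σ)) (B : ∀ k : ℕ, Set (Cong (freeAlg V k))) : Prop :=
  ∀ (k m : ℕ), ∀ θ ∈ B k, ∀ t : Fin (m + 1) → (freeAlg V k).carrier,
    ∃ θ' ∈ B m, θ'.r = conSubstRel θ t

/-- A family of congruences is closed under finite intersections (componentwise). -/
def InterClosed (V : Set (Alg σ)) (B : ∀ k : ℕ, Set (Cong (freeAlg V k))) : Prop :=
  ∀ (k n : ℕ) (θs : Fin (n + 1) → Cong (freeAlg V k)), (∀ i, θs i ∈ B k) →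
    ∃ θ' ∈ B k, θ'.r = fun a b => ∀ i, (θs i).r a b

/-- A family of congruences is upward closed (componentwise). -/
def UpClosed (V : Set (Alg σ)) (B : ∀ k : ℕ, Set (Cong (freeAlg V k))) : Prop :=
  ∀ (k : ℕ), ∀ θ ∈ B k, ∀ ψ : Cong (freeAlg V k), (∀ a b, θ.r a b → ψ.r a b) → ψ ∈ B k

/-- A filter on `X × X` is a uniformity: every entourage contains the diagonal, the
converse of an entourage is an entourage, and the generalised triangle inequality. -/
def IsUniformity {X : Type} (u : Filter (X × X)) : Prop :=
  (∀ U ∈ u, ∀ x : X, (x, x) ∈ U) ∧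
  (∀ U ∈ u, {p : X × X | (p.2, p.1) ∈ U} ∈ u) ∧
  (∀ U ∈ u, ∃ W ∈ u, ∀ x y z : X, (x, y) ∈ W → (y, z) ∈ W → (x, z) ∈ U)

/-- `U^C` (the component of index `k`, i.e. of arity `k + 1`): the filter on
`F_{k+1}^V × F_{k+1}^V` generated by the congruences `θ` of `F_{k+1}^V` such that
`F_{k+1}^V/θ` is isomorphic to a member of `C`. -/
noncomputable def unifC (V C : Set (Alg σ)) (k : ℕ) :
    Filter ((freeAlg V k).carrier × (freeAlg V k).carrier) :=
  Filter.generate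
    {U | ∃ θ : Cong (freeAlg V k), quotAlg (freeAlg V k) θ.r ∈ Icl C ∧ U = {p | θ.r p.1 p.2}}

/-- The `(k+1)`-ary part of `Clo(A)`: the `(k+1)`-ary term operations of `A`. -/
def CloK (A : Alg σ) (k : ℕ) : Type :=
  {g : (Fin (k + 1) → A.carrier) → A.carrier // ∃ t : Trm σ (k + 1), g = termOp A t}

/-- The uniformity of pointwise convergence on the `(k+1)`-ary part of `Clo(A)`:
generated by the sets `U_ā = {(f, g) | f(ā) = g(ā)}`. -/
noncomputable def ptwUnif (A : Alg σ) (k : ℕ) : Filter (CloK A k × CloK A k) :=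
  Filter.generate {U | ∃ a : Fin (k + 1) → A.carrier, U = {p | p.1.1 a = p.2.1 a}}

/-- The natural map from the free algebra for `C` onto `Clo(A)`, sending the class
of a term `t` to the term operation `t^A`. -/
noncomputable def natMap (C : Set (Alg σ)) (A : Alg σ) (k : ℕ) :
    (freeAlg C k).carrier → CloK A k :=
  fun q => ⟨termOp A q.out, q.out, rfl⟩

/-- The natural map between the free algebras of two classes (class of `t` to
class of `t`). -/
noncomputable def freeNatMap (C D : Set (Alg σ)) (k : ℕ) :
    (freeAlg C k).carrier → (freeAlg D k).carrier :=
  fun q => Quot.mk _ q.out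

/-- The natural map `Clo(A) → Clo(B)`, sending `t^A` to `t^B`. -/
noncomputable def cloNatMap (A B : Alg σ) (k : ℕ) : CloK A k → CloK B k :=
  fun g => ⟨termOp B (Classical.choose g.2), Classical.choose g.2, rfl⟩

/-- The variety generated by `A`. -/
def varietyGen (A : Alg σ) : Set (Alg σ) :=
  {B | ∀ V : Set (Alg σ), IsVariety V → A ∈ V → B ∈ V}

/-- The pseudovariety generated by `A`: the smallest class containing `A` closed
under finite products, subalgebras and homomorphic images. -/
def psvGen (A : Alg σ) : Set (Alg σ) :=
  {B | ∀ C : Set (Alg σ), A ∈ C → Hcl C ⊆ C → Scl C ⊆ C → Pfcl C ⊆ C → B ∈ C}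

/-- The pseudovariety of finitely generated algebras generated by `A`: the finitely
generated members of the pseudovariety generated by `A`. -/
def psvFgGen (A : Alg σ) : Set (Alg σ) := {B | FinGen B ∧ B ∈ psvGen A}

/-! ### Auxiliary lemmas for Statement 15 -/

section Aux

variable {σ : Signature}

theorem quot_mk_eq_rel {X : Type} {r : X → X → Prop} (hr : Equivalence r) {a b : X}
    (h : Quot.mk r a = Quot.mk r b) : r a b := by
  exact hr.eqvGen_iff.mp (Quot.eqvGen_exact h)

theorem freeCon_equiv (C : Set (Alg σ)) (n : ℕ) : Equivalence (FreeCon C n) :=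
  ⟨fun _ _ _ _ => rfl, fun h B hB v => (h B hB v).symm,
   fun h1 h2 B hB v => (h1 B hB v).trans (h2 B hB v)⟩

theorem out_rel (C : Set (Alg σ)) (n : ℕ) (t : Trm σ n) :
    FreeCon C n (Quot.mk (FreeCon C n) t).out t :=
  quot_mk_eq_rel (freeCon_equiv C n) (Quot.out_eq _)

theorem mk_app (C : Set (Alg σ)) (k : ℕ) (f : σ.F)
    (ts : Fin (σ.arity f) → Trm σ (k + 1)) :
    Quot.mk (FreeCon C (k + 1)) (Trm.app f ts)
      = (freeAlg C k).op f (fun i => Quot.mk (FreeCon C (k + 1)) (ts i)) := by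
  apply Quot.sound
  intro B hB v
  show B.op f _ = B.op f _
  congr 1
  funext i
  exact (out_rel C (k + 1) (ts i) B hB v).symm

theorem isHom_comp {B B' B'' : Alg σ} {g : B.carrier → B'.carrier}
    {g' : B'.carrier → B''.carrier} (hg : IsHom B B' g) (hg' : IsHom B' B'' g') :
    IsHom B B'' (fun x => g' (g x)) := by
  intro f x
  show g' (g (B.op f x)) = _
  rw [hg, hg']

theorem hom_ext {C : Set (Alg σ)} {k : ℕ} {B : Alg σ}
    {φ ψ : (freeAlg C k).carrier → B.carrier}
    (hφ : IsHom (freeAlg C k) B φ) (hψ : IsHom (freeAlg C k) B ψ)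
    (hgen : ∀ i : Fin (k + 1),
      φ (Quot.mk (FreeCon C (k + 1)) (Trm.var i)) = ψ (Quot.mk (FreeCon C (k + 1)) (Trm.var i))) :
    ∀ p, φ p = ψ p := by
  have key : ∀ t : Trm σ (k + 1),
      φ (Quot.mk (FreeCon C (k + 1)) t) = ψ (Quot.mk (FreeCon C (k + 1)) t) := by
    intro t
    induction t with
    | var i => exact hgen i
    | app f ts ih =>
      rw [mk_app]
      refine (hφ f _).trans (Eq.trans ?_ (hψ f _).symm)
      congr 1
      funext i
      exact ih i
  intro p
  rw [← Quot.out_eq p]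
  exact key p.out

theorem evalHom {C : Set (Alg σ)} {k : ℕ} {B : Alg σ} (hB : B ∈ C)
    (u : Fin (k + 1) → B.carrier) :
    IsHom (freeAlg C k) B (fun p => Trm.eval B u p.out) := by
  intro f x
  show Trm.eval B u (Quot.mk (FreeCon C (k + 1)) (Trm.app f fun i => (x i).out)).out = _
  have h1 := out_rel C (k + 1) (Trm.app f fun i => (x i).out) B hB u
  rw [h1]
  rfl

theorem varietyGen_isVariety (A : Alg σ) : IsVariety (varietyGen A) := by
  refine ⟨?_, ?_, ?_⟩
  · intro ι As hAs V hV hA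
    exact hV.1 ι As (fun i => hAs i V hV hA)
  · rintro B ⟨A', hA', e, he, hinj⟩ V hV hA
    exact hV.2.1 ⟨A', hA' V hV hA, e, he, hinj⟩
  · rintro B ⟨A', hA', h, hh, hsurj⟩ V hV hA
    exact hV.2.2 ⟨A', hA' V hV hA, h, hh, hsurj⟩

theorem self_mem_varietyGen (A : Alg σ) : A ∈ varietyGen A := fun _ _ hA => hA

/-- The key predicate: `B` is in the variety generated by `A`, and every hom from
the free algebra to `B` has kernel above a finite intersection of `U_ā`'s. -/
def Good (A : Alg σ) (k : ℕ) (B : Alg σ) : Prop :=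
  B ∈ varietyGen A ∧
  ∀ h : (freeAlg (varietyGen A) k).carrier → B.carrier, IsHom (freeAlg (varietyGen A) k) B h →
    ∃ s : Finset (Fin (k + 1) → A.carrier),
      ∀ p q : (freeAlg (varietyGen A) k).carrier,
        (∀ a ∈ s, Trm.eval A a p.out = Trm.eval A a q.out) → h p = h q

theorem good_self (A : Alg σ) (k : ℕ) : Good A k A := by
  refine ⟨self_mem_varietyGen A, fun h hh => ?_⟩
  set a : Fin (k + 1) → A.carrier :=
    fun i => h (Quot.mk (FreeCon (varietyGen A) (k + 1)) (Trm.var i)) with ha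
  refine ⟨{a}, fun p q hpq => ?_⟩
  have hext := hom_ext hh (evalHom (self_mem_varietyGen A) a) (fun i => ?_)
  · rw [hext p, hext q]
    exact hpq a (Finset.mem_singleton_self a)
  · have := out_rel (varietyGen A) (k + 1) (Trm.var i) A (self_mem_varietyGen A) a
    rw [this]
    rfl

theorem good_hom {A : Alg σ} {k : ℕ} {B B' : Alg σ} (hB : Good A k B)
    (g : B.carrier → B'.carrier) (hg : IsHom B B' g) (hsurj : Function.Surjective g) :
    Good A k B' := by
  refine ⟨(varietyGen_isVariety A).2.2 ⟨B, hB.1, g, hg, hsurj⟩, fun h hh => ?_⟩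
  set u : Fin (k + 1) → B.carrier :=
    fun i => (hsurj (h (Quot.mk (FreeCon (varietyGen A) (k + 1)) (Trm.var i)))).choose with hu
  obtain ⟨s, hs⟩ := hB.2 (fun p => Trm.eval B u p.out) (evalHom hB.1 u)
  have hext := hom_ext hh (isHom_comp (evalHom hB.1 u) hg) (fun i => ?_)
  · refine ⟨s, fun p q hpq => ?_⟩
    rw [hext p, hext q, hs p q hpq]
  · have h1 := out_rel (varietyGen A) (k + 1) (Trm.var i) B hB.1 u
    show _ = g (Trm.eval B u _)
    rw [h1]
    exact ((hsurj (h (Quot.mk (FreeCon (varietyGen A) (k + 1)) (Trm.var i)))).choose_spec).symm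

theorem good_sub {A : Alg σ} {k : ℕ} {B B' : Alg σ} (hB' : Good A k B')
    (e : B.carrier → B'.carrier) (he : IsHom B B' e) (hinj : Function.Injective e) :
    Good A k B := by
  refine ⟨(varietyGen_isVariety A).2.1 ⟨B', hB'.1, e, he, hinj⟩, fun h hh => ?_⟩
  obtain ⟨s, hs⟩ := hB'.2 (fun p => e (h p)) (isHom_comp hh he)
  exact ⟨s, fun p q hpq => hinj (hs p q hpq)⟩

theorem good_pi {A : Alg σ} {k : ℕ} {n : ℕ} (As : Fin (n + 1) → Alg σ)
    (hAs : ∀ i, Good A k (As i)) : Good A k (PiAlg As) := by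
  classical
  refine ⟨(varietyGen_isVariety A).1 _ As (fun i => (hAs i).1), fun h hh => ?_⟩
  have hproj : ∀ i, IsHom (PiAlg As) (As i) (fun x => x i) := fun i f x => rfl
  choose s hs using fun i => (hAs i).2 (fun p => h p i) (isHom_comp hh (hproj i))
  refine ⟨Finset.univ.biUnion s, fun p q hpq => funext fun i => ?_⟩
  exact hs i p q (fun a ha => hpq a (Finset.mem_biUnion.2 ⟨i, Finset.mem_univ _, ha⟩))

end Aux
/-- If `θ` is a congruence of `F_k^V` (for `V` the variety
generated by `A`) whose quotient belongs to the pseudovariety of finitely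
generated algebras generated by `A`, then (identifying `F_k^V` with the k-ary term
operations of `A`) there are tuples `ā¹, …, ā^m ∈ A^k` with
`U_{ā¹} ∩ ⋯ ∩ U_{ā^m} ⊆ θ`. -/
theorem entourage_below_congruence {σ : Signature} (A : Alg σ) (k : ℕ)
    (θ : Cong (freeAlg (varietyGen A) k))
    (hθ : quotAlg (freeAlg (varietyGen A) k) θ.r ∈ psvFgGen A) :
    ∃ (m : ℕ) (as : Fin (m + 1) → (Fin (k + 1) → A.carrier)),
      ∀ p q : (freeAlg (varietyGen A) k).carrier,
        (∀ i, Trm.eval A (as i) p.out = Trm.eval A (as i) q.out) → θ.r p q := by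
  classical
  obtain ⟨hfg, hpsv⟩ := hθ
  have hq : Good A k (quotAlg (freeAlg (varietyGen A) k) θ.r) := by
    refine hpsv {B | Good A k B} (good_self A k) ?_ ?_ ?_
    · rintro B ⟨B', hB', g, hg, hsurj⟩
      exact good_hom hB' g hg hsurj
    · rintro B ⟨B', hB', e, he, hinj⟩
      exact good_sub hB' e he hinj
    · rintro B ⟨n, As, hAs, hmap, hhom, hbij⟩
      exact good_hom (good_pi As hAs) hmap hhom hbij.2
  have hmk : IsHom (freeAlg (varietyGen A) k) (quotAlg (freeAlg (varietyGen A) k) θ.r)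
      (Quot.mk θ.r) := by
    intro f x
    apply Quot.sound
    apply θ.iscon.2
    intro i
    exact θ.iscon.1.symm (quot_mk_eq_rel θ.iscon.1 (Quot.out_eq (Quot.mk θ.r (x i))))
  obtain ⟨s, hs⟩ := hq.2 (Quot.mk θ.r) hmk
  obtain ⟨a0⟩ := A.nonempty
  refine ⟨s.card, fun i =>
    if hi : (i : ℕ) < s.toList.length then s.toList.get ⟨i, hi⟩ else fun _ => a0,
    fun p q hpq => ?_⟩
  apply quot_mk_eq_rel θ.iscon.1
  apply hs p q
  intro a ha
  obtain ⟨j, hj⟩ := List.mem_iff_get.mp (Finset.mem_toList.mpr ha)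
  have hjlt : (j : ℕ) < s.card + 1 := by
    have h1 : (j : ℕ) < s.toList.length := j.2
    have h2 := Finset.length_toList s
    omega
  have := hpq ⟨(j : ℕ), hjlt⟩
  simp only [dif_pos j.2] at this
  rwa [hj] at this
end

section
/- Let A and B be finitely generated τ-algebras. Then B is contained in the pseudovariety generated by A if and only if the natural clone homomorphism from Clo(A) onto Clo(B), sending each term operation t^A to t^B, is well-defined and uniformly continuous with respect to the uniformities of pointwise convergence on Clo(A) and on Clo(B). -/
variable {σ : Signature}

/-! ### Auxiliary lemmas -/

section Aux

variable {σ : Signature}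

lemma eval_hom {A B : Alg σ} {h : A.carrier → B.carrier} (hh : IsHom A B h)
    {n : ℕ} (t : Trm σ n) (v : Fin n → A.carrier) :
    h (t.eval A v) = t.eval B (fun i => h (v i)) := by
  induction t with
  | var i => rfl
  | app f ts ih =>
    simp only [Trm.eval]
    rw [hh]
    congr 1
    funext i
    exact ih i

lemma eval_pi {ι : Type} (Ai : ι → Alg σ) {n : ℕ} (t : Trm σ n)
    (v : Fin n → (PiAlg Ai).carrier) (i : ι) :
    t.eval (PiAlg Ai) v i = t.eval (Ai i) (fun j => v j i) := by
  induction t with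
  | var j => rfl
  | app f ts ih =>
    show (Ai i).op f _ = (Ai i).op f _
    congr 1
    funext j
    exact ih j

lemma inClosure_mono {A : Alg σ} {S T : Set A.carrier} (hST : S ⊆ T) {a : A.carrier}
    (h : InClosure A S a) : InClosure A T a := by
  induction h with
  | base a ha => exact .base a (hST ha)
  | app f x _ ih => exact .app f x ih

lemma inClosure_eval {A : Alg σ} {S : Set A.carrier} {n : ℕ} {v : Fin n → A.carrier}
    (hv : ∀ j, InClosure A S (v j)) (t : Trm σ n) : InClosure A S (t.eval A v) := by
  induction t with
  | var j => exact hv j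
  | app f ts ih => exact .app f _ ih

lemma exists_term_of_inClosure {A : Alg σ} {n : ℕ} {v : Fin n → A.carrier} {a : A.carrier}
    (h : InClosure A (Set.range v) a) : ∃ t : Trm σ n, a = t.eval A v := by
  induction h with
  | base a ha =>
    obtain ⟨j, rfl⟩ := ha
    exact ⟨.var j, rfl⟩
  | app f x hx ih =>
    choose ts hts using ih
    refine ⟨.app f ts, ?_⟩
    show A.op f x = A.op f _
    congr 1
    funext i
    exact hts i

lemma exists_gen_tuple {B : Alg σ} (hB : FinGen B) :
    ∃ (m : ℕ) (b : Fin (m + 1) → B.carrier), ∀ a, ∃ t : Trm σ (m + 1), a = t.eval B b := by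
  classical
  obtain ⟨S, hSfin, hSgen⟩ := hB
  obtain ⟨pt⟩ := B.nonempty
  set l := hSfin.toFinset.toList with hl
  refine ⟨l.length, fun i => l.getD i pt, fun a => ?_⟩
  refine exists_term_of_inClosure (inClosure_mono ?_ (hSgen a))
  intro x hx
  have hxl : x ∈ l := by
    rw [hl, Finset.mem_toList, Set.Finite.mem_toFinset]
    exact hx
  obtain ⟨i, hi, hgi⟩ := List.getElem_of_mem hxl
  refine ⟨⟨i, Nat.lt_succ_of_lt hi⟩, ?_⟩
  simpa [List.getD_eq_getElem, hi] using hgi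

lemma preimage_mem_generate {X Y : Type} (φ : X → Y) {g : Set (Set Y)} {F : Filter X}
    (h : ∀ U ∈ g, φ ⁻¹' U ∈ F) : ∀ W ∈ Filter.generate g, φ ⁻¹' W ∈ F := by
  intro W hW
  rw [Filter.mem_generate_iff] at hW
  obtain ⟨t, htg, htfin, hts⟩ := hW
  have hmem : ⋂₀ ((fun U => φ ⁻¹' U) '' t) ∈ F := by
    rw [Filter.sInter_mem (htfin.image _)]
    rintro _ ⟨U, hU, rfl⟩
    exact h U (htg hU)
  refine F.mem_of_superset hmem ?_
  rw [Set.sInter_image]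
  intro x hx
  apply hts
  simp only [Set.mem_iInter, Set.mem_preimage] at hx
  intro U hU
  exact hx U hU

lemma mem_generate_self {X : Type} {g : Set (Set X)} {U : Set X} (hU : U ∈ g) :
    U ∈ Filter.generate g :=
  Filter.mem_generate_iff.mpr ⟨{U}, by simpa using hU, Set.finite_singleton U, by simp⟩

lemma cloNatMap_fst {A B : Alg σ} {k : ℕ} (g : CloK A k) :
    (cloNatMap A B k g).1 = termOp B (Classical.choose g.2) := rfl

lemma cloNatMap_termOp {A B : Alg σ}
    (hid : ∀ (k : ℕ) (s t : Trm σ (k + 1)), termOp A s = termOp A t → termOp B s = termOp B t)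
    {k : ℕ} (g : CloK A k) (t : Trm σ (k + 1)) (ht : g.1 = termOp A t) :
    (cloNatMap A B k g).1 = termOp B t := by
  have hspec := Classical.choose_spec g.2
  exact hid k _ t (hspec ▸ ht)

/-- The set `U_b` in the `(k+1)`-ary part of `Clo(B)`. -/
def Utup (B : Alg σ) {k : ℕ} (b : Fin (k + 1) → B.carrier) : Set (CloK B k × CloK B k) :=
  {p | p.1.1 b = p.2.1 b}

lemma Utup_mem (B : Alg σ) {k : ℕ} (b : Fin (k + 1) → B.carrier) :
    Utup B b ∈ ptwUnif B k :=
  mem_generate_self ⟨b, rfl⟩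

/-- The key "good pair" predicate: the right-hand side of the theorem. -/
def GoodPair (A B : Alg σ) : Prop :=
  (∀ (k : ℕ) (s t : Trm σ (k + 1)), termOp A s = termOp A t → termOp B s = termOp B t) ∧
  (∀ k : ℕ, ∀ W ∈ ptwUnif B k,
      Prod.map (cloNatMap A B k) (cloNatMap A B k) ⁻¹' W ∈ ptwUnif A k)

lemma goodPair_of_gen {A B : Alg σ}
    (h1 : ∀ (k : ℕ) (s t : Trm σ (k + 1)), termOp A s = termOp A t → termOp B s = termOp B t)
    (h2 : ∀ (k : ℕ) (b : Fin (k + 1) → B.carrier),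
      Prod.map (cloNatMap A B k) (cloNatMap A B k) ⁻¹' (Utup B b) ∈ ptwUnif A k) :
    GoodPair A B := by
  refine ⟨h1, fun k W hW => ?_⟩
  refine preimage_mem_generate _ ?_ W hW
  rintro U ⟨b, rfl⟩
  exact h2 k b

lemma goodPair_refl (A : Alg σ) : GoodPair A A := by
  refine goodPair_of_gen (fun k s t h => h) (fun k b => ?_)
  refine (ptwUnif A k).mem_of_superset (Utup_mem A b) ?_
  rintro ⟨f, g⟩ (hfg : f.1 b = g.1 b)
  show (cloNatMap A A k f).1 b = (cloNatMap A A k g).1 b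
  rw [cloNatMap_fst, cloNatMap_fst, ← Classical.choose_spec f.2, ← Classical.choose_spec g.2]
  exact hfg

lemma goodPair_hom {A B B' : Alg σ} (hG : GoodPair A B) {h : B.carrier → B'.carrier}
    (hh : IsHom B B' h) (hsurj : Function.Surjective h) : GoodPair A B' := by
  obtain ⟨h1, h2⟩ := hG
  refine goodPair_of_gen ?_ ?_
  · intro k s t hst
    funext v
    choose w hw using fun i => hsurj (v i)
    have hv : v = fun i => h (w i) := by funext i; exact (hw i).symm
    show s.eval B' v = t.eval B' v
    rw [hv, ← eval_hom hh, ← eval_hom hh]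
    have : s.eval B w = t.eval B w := congrFun (h1 k s t hst) w
    rw [this]
  · intro k b'
    choose b hb using fun i => hsurj (b' i)
    refine (ptwUnif A k).mem_of_superset (h2 k _ (Utup_mem B b)) ?_
    rintro ⟨f, g⟩ hfg
    simp only [Set.mem_preimage, Prod.map_apply] at hfg ⊢
    have hfg' : (cloNatMap A B k f).1 b = (cloNatMap A B k g).1 b := hfg
    show (cloNatMap A B' k f).1 b' = (cloNatMap A B' k g).1 b'
    rw [cloNatMap_fst, cloNatMap_fst] at hfg' ⊢
    have hb' : b' = fun i => h (b i) := by funext i; exact (hb i).symm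
    show (Classical.choose f.2).eval B' b' = (Classical.choose g.2).eval B' b'
    rw [hb', ← eval_hom hh, ← eval_hom hh]
    have : (Classical.choose f.2).eval B b = (Classical.choose g.2).eval B b := hfg'
    rw [this]

lemma goodPair_sub {A B B' : Alg σ} (hG : GoodPair A B) {e : B'.carrier → B.carrier}
    (he : IsHom B' B e) (hinj : Function.Injective e) : GoodPair A B' := by
  obtain ⟨h1, h2⟩ := hG
  refine goodPair_of_gen ?_ ?_
  · intro k s t hst
    funext v
    apply hinj
    show e (s.eval B' v) = e (t.eval B' v)
    rw [eval_hom he, eval_hom he]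
    exact congrFun (h1 k s t hst) _
  · intro k b'
    refine (ptwUnif A k).mem_of_superset (h2 k _ (Utup_mem B (fun i => e (b' i)))) ?_
    rintro ⟨f, g⟩ hfg
    simp only [Set.mem_preimage, Prod.map_apply] at hfg ⊢
    have hfg' : (cloNatMap A B k f).1 (fun i => e (b' i))
        = (cloNatMap A B k g).1 (fun i => e (b' i)) := hfg
    show (cloNatMap A B' k f).1 b' = (cloNatMap A B' k g).1 b'
    rw [cloNatMap_fst, cloNatMap_fst] at hfg' ⊢
    apply hinj
    show e ((Classical.choose f.2).eval B' b') = e ((Classical.choose g.2).eval B' b')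
    rw [eval_hom he, eval_hom he]
    exact hfg'

lemma goodPair_pi {A : Alg σ} {n : ℕ} {Bi : Fin (n + 1) → Alg σ}
    (hG : ∀ i, GoodPair A (Bi i)) : GoodPair A (PiAlg Bi) := by
  refine goodPair_of_gen ?_ ?_
  · intro k s t hst
    funext v
    funext i
    show Trm.eval (PiAlg Bi) v s i = Trm.eval (PiAlg Bi) v t i
    rw [eval_pi, eval_pi]
    exact congrFun ((hG i).1 k s t hst) _
  · intro k c
    have hmem : (⋂ i : Fin (n + 1),
        Prod.map (cloNatMap A (Bi i) k) (cloNatMap A (Bi i) k) ⁻¹'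
          (Utup (Bi i) (fun j => c j i))) ∈ ptwUnif A k := by
      refine Filter.iInter_mem.mpr fun i => ?_
      exact (hG i).2 k _ (Utup_mem (Bi i) _)
    refine (ptwUnif A k).mem_of_superset hmem ?_
    rintro ⟨f, g⟩ hfg
    simp only [Set.mem_iInter, Set.mem_preimage, Prod.map_apply] at hfg
    show (cloNatMap A (PiAlg Bi) k f).1 c = (cloNatMap A (PiAlg Bi) k g).1 c
    rw [cloNatMap_fst, cloNatMap_fst]
    funext i
    show Trm.eval (PiAlg Bi) c (Classical.choose f.2) i
        = Trm.eval (PiAlg Bi) c (Classical.choose g.2) i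
    rw [eval_pi, eval_pi]
    exact hfg i

lemma goodPair_closed (A : Alg σ) :
    Hcl {B | GoodPair A B} ⊆ {B | GoodPair A B} ∧
    Scl {B | GoodPair A B} ⊆ {B | GoodPair A B} ∧
    Pfcl {B | GoodPair A B} ⊆ {B | GoodPair A B} := by
  refine ⟨?_, ?_, ?_⟩
  · rintro B' ⟨B, hB, h, hh, hsurj⟩
    exact goodPair_hom hB hh hsurj
  · rintro B' ⟨B, hB, e, he, hinj⟩
    exact goodPair_sub hB he hinj
  · rintro B' ⟨n, Bi, hBi, h, hh, hbij⟩
    exact goodPair_hom (goodPair_pi hBi) hh hbij.surjective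

end Aux

/-- Corollary 9 of the paper. For finitely generated τ-algebras
`A` and `B`: `B` lies in the pseudovariety generated by `A` iff the natural clone
homomorphism from `Clo(A)` onto `Clo(B)`, sending `t^A` to `t^B`, is well-defined
and uniformly continuous with respect to the uniformities of pointwise convergence
on `Clo(A)` and on `Clo(B)`. -/
theorem pseudovariety_generated_by_fg {σ : Signature} (A B : Alg σ)
    (hA : FinGen A) (hB : FinGen B) :
    B ∈ psvGen A ↔
      (∀ (k : ℕ) (s t : Trm σ (k + 1)), termOp A s = termOp A t → termOp B s = termOp B t) ∧
      (∀ k : ℕ, ∀ W ∈ ptwUnif B k,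
          Prod.map (cloNatMap A B k) (cloNatMap A B k) ⁻¹' W ∈ ptwUnif A k) := by
  constructor
  · intro hmem
    exact hmem {B' | GoodPair A B'} (goodPair_refl A) (goodPair_closed A).1
      (goodPair_closed A).2.1 (goodPair_closed A).2.2
  · rintro ⟨h1, h2⟩
    classical
    obtain ⟨m, b, hb⟩ := exists_gen_tuple hB
    have hUb := h2 m _ (Utup_mem B b)
    obtain ⟨T, hTg, hTfin, hTsub⟩ := Filter.mem_generate_iff.mp hUb
    haveI := hTfin.fintype
    choose tup htup using fun (U : T) => hTg U.2
    obtain ⟨ptA⟩ := A.nonempty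
    set nT := Fintype.card T with hnT
    let eT := Fintype.equivFin T
    let abar : Fin (nT + 1) → (Fin (m + 1) → A.carrier) :=
      fun i => if h : (i : ℕ) < nT then tup (eT.symm ⟨i, h⟩) else fun _ => ptA
    have key : ∀ s t : Trm σ (m + 1),
        (∀ i : Fin (nT + 1), termOp A s (abar i) = termOp A t (abar i)) →
        s.eval B b = t.eval B b := by
      intro s t hst
      have hmem2 : ((⟨termOp A s, s, rfl⟩ : CloK A m),
          (⟨termOp A t, t, rfl⟩ : CloK A m)) ∈ ⋂₀ T := by
        intro U hU
        have hUeq : U = {p : CloK A m × CloK A m | p.1.1 (tup ⟨U, hU⟩) = p.2.1 (tup ⟨U, hU⟩)} :=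
          htup ⟨U, hU⟩
        rw [hUeq]
        have hi : ((eT ⟨U, hU⟩ : Fin nT) : ℕ) < nT := (eT ⟨U, hU⟩).2
        have habar : abar ⟨(eT ⟨U, hU⟩ : Fin nT), Nat.lt_succ_of_lt hi⟩ = tup ⟨U, hU⟩ := by
          show (if h : _ then _ else _) = _
          rw [dif_pos hi]
          congr 1
          have : (⟨((eT ⟨U, hU⟩ : Fin nT) : ℕ), hi⟩ : Fin nT) = eT ⟨U, hU⟩ := rfl
          rw [this, Equiv.symm_apply_apply]
        have := hst ⟨(eT ⟨U, hU⟩ : Fin nT), Nat.lt_succ_of_lt hi⟩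
        rw [habar] at this
        exact this
      have hsub := hTsub hmem2
      have hsub' : (cloNatMap A B m ⟨termOp A s, s, rfl⟩).1 b
          = (cloNatMap A B m ⟨termOp A t, t, rfl⟩).1 b := hsub
      exact (congrFun (cloNatMap_termOp h1 (⟨termOp A s, s, rfl⟩ : CloK A m) s rfl) b).symm.trans
        (hsub'.trans (congrFun (cloNatMap_termOp h1 (⟨termOp A t, t, rfl⟩ : CloK A m) t rfl) b))
    intro C hAC hH hS hP
    set P := PiAlg (fun _ : Fin (nT + 1) => A) with hPdef
    have hPC : P ∈ C :=
      hP ⟨nT, fun _ => A, fun _ => hAC, id, fun f x => rfl, Function.bijective_id⟩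
    let c : Fin (m + 1) → P.carrier := fun j i => abar i j
    have hcne : (Set.range c).Nonempty := ⟨c 0, 0, rfl⟩
    set G := genSubAlg P (Set.range c) hcne with hGdef
    have hGC : G ∈ C := hS ⟨P, hPC, Subtype.val, fun f x => rfl, Subtype.val_injective⟩
    have key' : ∀ s t : Trm σ (m + 1),
        s.eval P c = t.eval P c → s.eval B b = t.eval B b := by
      intro s t hst
      refine key s t fun i => ?_
      have := congrFun hst i
      rw [eval_pi, eval_pi] at this
      exact this
    have hterm : ∀ x : G.carrier, ∃ t : Trm σ (m + 1), x.1 = t.eval P c :=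
      fun x => exists_term_of_inClosure x.2
    let hmap : G.carrier → B.carrier := fun x => (Classical.choose (hterm x)).eval B b
    have hval : ∀ (x : G.carrier) (t : Trm σ (m + 1)), x.1 = t.eval P c →
        hmap x = t.eval B b := by
      intro x t hx
      apply key'
      rw [← Classical.choose_spec (hterm x), hx]
    have hhom : IsHom G B hmap := by
      intro f x
      have hx : (G.op f x).1
          = (Trm.app f (fun i => Classical.choose (hterm (x i)))).eval P c := by
        show P.op f _ = P.op f _
        congr 1
        funext i
        exact Classical.choose_spec (hterm (x i))
      rw [hval _ _ hx]
      rfl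
    have hsurj : Function.Surjective hmap := by
      intro b'
      obtain ⟨t, ht⟩ := hb b'
      refine ⟨⟨t.eval P c, inClosure_eval (fun j => InClosure.base (c j) (Set.mem_range_self j)) t⟩, ?_⟩
      exact (hval (⟨t.eval P c, inClosure_eval (fun j => InClosure.base (c j) (Set.mem_range_self j)) t⟩ : G.carrier) t rfl).trans ht.symm
    exact hH ⟨G, hGC, hmap, hhom, hsurj⟩
end
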